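/- Let K be a commutative ring and A a nonunital commutative associative K-algebra. Let U be the quotient of the tensor algebra Tens_K(A ⊕ A) by the two-sided ideal generated by the elements l_a − r_a, r_a·r_b − r_{ab}, l_a·r_b − r_b·l_a, and l_{ab} − l_b·l_a for all a, b ∈ A, where l_a (resp. r_a) denotes the image in the tensor algebra of (a,0) (resp. (0,a)). Then there is an isomorphism of unital K-algebras U ≅ A₊ carrying the class of r_a to a, where A₊ is the unitization of A. -/

import Mathlib

noncomputable section

/-- `l_a ∈ Tens_K(A ⊕ A)`. -/
def lT (K A : Type) [CommRing K] [NonUnitalCommRing A] [Module K A] (a : A) :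
    TensorAlgebra K (A × A) :=
  TensorAlgebra.ι K (a, 0)

/-- `r_a ∈ Tens_K(A ⊕ A)`. -/
def rT (K A : Type) [CommRing K] [NonUnitalCommRing A] [Module K A] (a : A) :
    TensorAlgebra K (A × A) :=
  TensorAlgebra.ι K (0, a)

/-- The relations defining the universal enveloping algebra of a commutative associative
algebra: quotienting by this relation is the same as quotienting by the two-sided ideal
generated by `l_a − r_a`, `r_a·r_b − r_{ab}`, `l_a·r_b − r_b·l_a`, `l_{ab} − l_b·l_a`. -/
inductive ComRel (K A : Type) [CommRing K] [NonUnitalCommRing A] [Module K A] :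
    TensorAlgebra K (A × A) → TensorAlgebra K (A × A) → Prop
  | lreq (a : A) : ComRel K A (lT K A a) (rT K A a)
  | rr (a b : A) : ComRel K A (rT K A a * rT K A b) (rT K A (a * b))
  | lr (a b : A) : ComRel K A (lT K A a * rT K A b) (rT K A b * lT K A a)
  | ll (a b : A) : ComRel K A (lT K A (a * b)) (lT K A b * lT K A a)

def rL (K A : Type) [CommRing K] [NonUnitalCommRing A] [Module K A] :
    A →ₗ[K] TensorAlgebra K (A × A) :=
  (TensorAlgebra.ι K).comp (LinearMap.inr K A A)

lemma rT_eq_rL (K A : Type) [CommRing K] [NonUnitalCommRing A] [Module K A] (a : A) :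
    rT K A a = rL K A a := rfl

/-- The universal enveloping algebra of a nonunital commutative associative `K`-algebra
`A` is its unitization `A₊`, via `r_a ↦ a`. -/
theorem uCom_iso (K A : Type) [CommRing K] [NonUnitalCommRing A] [Module K A]
    [IsScalarTower K A A] [SMulCommClass K A A] :
    ∃ e : RingQuot (ComRel K A) ≃ₐ[K] Unitization K A,
      ∀ a : A, e (RingQuot.mkAlgHom K (ComRel K A) (rT K A a)) = (a : Unitization K A) := by
  classical
  -- linear map sending (a, b) to a + b in the unitization
  let f : A × A →ₗ[K] Unitization K A :=
    { toFun := fun p => (p.1 : Unitization K A) + (p.2 : Unitization K A)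
      map_add' := by
        intro p q
        simp [Unitization.inr_add]
        abel
      map_smul' := by
        intro k p
        simp [Unitization.inr_smul, smul_add] }
  have hf : ∀ p : A × A, f p = (p.1 : Unitization K A) + (p.2 : Unitization K A) := fun _ => rfl
  have hrel : ∀ ⦃x y : TensorAlgebra K (A × A)⦄, ComRel K A x y →
      TensorAlgebra.lift K f x = TensorAlgebra.lift K f y := by
    rintro x y (⟨a⟩ | ⟨a, b⟩ | ⟨a, b⟩ | ⟨a, b⟩) <;>
      simp [lT, rT, hf, Unitization.inr_mul, mul_comm]
  let toU : RingQuot (ComRel K A) →ₐ[K] Unitization K A :=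
    RingQuot.liftAlgHom K ⟨TensorAlgebra.lift K f, hrel⟩
  have htoU : ∀ x, toU (RingQuot.mkAlgHom K (ComRel K A) x) = TensorAlgebra.lift K f x :=
    fun x => RingQuot.liftAlgHom_mkAlgHom_apply K _ _ x
  have hrT : ∀ a : A, toU (RingQuot.mkAlgHom K (ComRel K A) (rT K A a)) =
      (a : Unitization K A) := by
    intro a
    simp [htoU, rT, hf]
  -- the nonunital algebra map A → RingQuot, namely a ↦ [r_a]
  let gl : A →ₗ[K] RingQuot (ComRel K A) :=
    (RingQuot.mkAlgHom K (ComRel K A)).toLinearMap.comp (rL K A)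
  have hgl : ∀ a : A, gl a = RingQuot.mkAlgHom K (ComRel K A) (rT K A a) := fun _ => rfl
  let g : A →ₙₐ[K] RingQuot (ComRel K A) :=
    { gl with
      map_zero' := map_zero gl
      map_mul' := by
        intro a b
        show gl (a * b) = gl a * gl b
        rw [hgl, hgl, hgl, ← map_mul]
        exact (RingQuot.mkAlgHom_rel K (ComRel.rr a b)).symm }
  have hg : ∀ a : A, g a = RingQuot.mkAlgHom K (ComRel K A) (rT K A a) := fun a => hgl a
  let fromU : Unitization K A →ₐ[K] RingQuot (ComRel K A) := Unitization.lift g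
  have hfromU : ∀ a : A, fromU (a : Unitization K A)
      = RingQuot.mkAlgHom K (ComRel K A) (rT K A a) := by
    intro a
    simp [fromU, Unitization.lift_apply, hg]
  have hlr : ∀ a : A, RingQuot.mkAlgHom K (ComRel K A) (lT K A a)
      = RingQuot.mkAlgHom K (ComRel K A) (rT K A a) :=
    fun a => RingQuot.mkAlgHom_rel K (ComRel.lreq a)
  have h1 : toU.comp fromU = AlgHom.id K (Unitization K A) := by
    apply Unitization.algHom_ext'
    apply NonUnitalAlgHom.ext
    intro a
    show toU (fromU (a : Unitization K A)) = (a : Unitization K A)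
    rw [hfromU, hrT]
  have h2 : fromU.comp toU = AlgHom.id K (RingQuot (ComRel K A)) := by
    apply RingQuot.ringQuot_ext'
    apply TensorAlgebra.hom_ext
    apply LinearMap.ext
    intro p
    obtain ⟨a, b⟩ := p
    have hsplit : TensorAlgebra.ι K ((a, b) : A × A) = lT K A a + rT K A b := by
      rw [lT, rT, ← map_add]
      congr 1
      simp [Prod.mk_add_mk]
    simp only [LinearMap.coe_comp, Function.comp_apply, AlgHom.toLinearMap_apply,
      AlgHom.coe_comp, AlgHom.coe_id, id_eq]
    rw [hsplit, map_add, map_add, htoU, htoU]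
    have hlta : TensorAlgebra.lift K f (lT K A a) = (a : Unitization K A) := by
      simp [lT, hf]
    have hrtb : TensorAlgebra.lift K f (rT K A b) = (b : Unitization K A) := by
      simp [rT, hf]
    rw [hlta, hrtb, map_add, hfromU, hfromU, hlr]
  refine ⟨AlgEquiv.ofAlgHom toU fromU h1 h2, ?_⟩
  intro a
  simpa using hrT a

end
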